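/- Let G be a connected finite graph and let H_1, ..., H_k be pairwise vertex-disjoint subgraphs of G. Then there exists a subforest T of G (a subgraph without cycles) such that the graph T ∪ H_1 ∪ ... ∪ H_k is connected and every cycle of T ∪ H_1 ∪ ... ∪ H_k is a cycle of H_1 ∪ ... ∪ H_k. -/

import Mathlib

variable {V : Type*} [Fintype V] [DecidableEq V]

open SimpleGraph

private lemma reach_del {V : Type*} {G : SimpleGraph V} {x y u v : V}
    (hr : (G \ SimpleGraph.fromEdgeSet {s(x, y)}).Reachable x y) (p : G.Walk u v) :
    (G \ SimpleGraph.fromEdgeSet {s(x, y)}).Reachable u v := by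
  induction p with
  | nil => exact Reachable.refl _
  | @cons a b c h p ih =>
    refine Reachable.trans ?_ ih
    by_cases he : s(a, b) = s(x, y)
    · rw [Sym2.eq_iff] at he
      rcases he with ⟨rfl, rfl⟩ | ⟨rfl, rfl⟩
      · exact hr
      · exact hr.symm
    · exact Adj.reachable (by simp [sdiff_adj, fromEdgeSet_adj, h, he])

private lemma connected_del {V : Type*} {G : SimpleGraph V} {x y : V}
    (hG : G.Connected) (hr : (G \ SimpleGraph.fromEdgeSet {s(x, y)}).Reachable x y) :
    (G \ SimpleGraph.fromEdgeSet {s(x, y)}).Connected := by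
  rw [connected_iff]
  refine ⟨fun u v => ?_, hG.nonempty⟩
  obtain ⟨p⟩ := hG.preconnected u v
  exact reach_del hr p

/-- connecting forest: for pairwise vertex-disjoint subgraphs
`H 1, …, H k` of a finite connected graph `G`, there is an acyclic subgraph `T` of `G`
(a subforest) such that `T ∪ H 1 ∪ ⋯ ∪ H k` is connected and every cycle of
`T ∪ H 1 ∪ ⋯ ∪ H k` is a cycle of `H 1 ∪ ⋯ ∪ H k`. -/
theorem exists_connecting_forest (G : SimpleGraph V) (hG : G.Connected)
    (k : ℕ) (H : Fin k → G.Subgraph)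
    (hdisj : ∀ i j, i ≠ j → Disjoint (H i).verts (H j).verts) :
    ∃ T : G.Subgraph,
      (∀ (v : V) (w : G.Walk v v), w.IsCycle → ¬ ∀ e ∈ w.edges, e ∈ T.edgeSet) ∧
      (T ⊔ ⨆ i, H i).Connected ∧
      (∀ (v : V) (w : G.Walk v v), w.IsCycle →
        (∀ e ∈ w.edges, e ∈ (T ⊔ ⨆ i, H i).edgeSet) →
        ∀ e ∈ w.edges, e ∈ (⨆ i, H i).edgeSet) := by
  classical
  set A : SimpleGraph V := (⨆ i, H i).spanningCoe with hA
  have hAG : A ≤ G := Subgraph.spanningCoe_le _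
  have hAedge : ∀ e, e ∈ A.edgeSet ↔ e ∈ (⨆ i, H i).edgeSet := by
    intro e
    induction e using Sym2.ind with
    | _ x y => simp [hA, Subgraph.mem_edgeSet]
  -- minimize the number of edges of F subject to (F ⊔ A).Connected
  set P : SimpleGraph V → Prop := fun F => F ≤ G ∧ (F ⊔ A).Connected with hP
  have hPG : P G := ⟨le_rfl, by rwa [sup_of_le_left hAG]⟩
  have hne : {n | ∃ F, P F ∧ F.edgeSet.ncard = n}.Nonempty :=
    ⟨G.edgeSet.ncard, G, hPG, rfl⟩
  obtain ⟨F, hPF, hcard⟩ := Nat.sInf_mem hne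
  have hmin : ∀ F', P F' → sInf {n | ∃ F, P F ∧ F.edgeSet.ncard = n} ≤ F'.edgeSet.ncard :=
    fun F' hF' => Nat.sInf_le ⟨F', hF', rfl⟩
  obtain ⟨hFG, hFc⟩ := hPF
  -- the general "smaller candidate" contradiction
  have hsmaller : ∀ (F' : SimpleGraph V) (e : Sym2 V), e ∈ F.edgeSet →
      F' = F \ SimpleGraph.fromEdgeSet {e} → ¬ P F' := by
    rintro F' e he rfl hPF'
    have hsub : (F \ SimpleGraph.fromEdgeSet {e}).edgeSet = F.edgeSet \ {e} := by
      rw [edgeSet_sdiff, edgeSet_fromEdgeSet, edgeSet_sdiff_sdiff_isDiag]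
    have hlt : (F \ SimpleGraph.fromEdgeSet {e}).edgeSet.ncard < F.edgeSet.ncard := by
      rw [hsub]
      exact Set.ncard_lt_ncard (Set.sdiff_singleton_ssubset.mpr he) (Set.toFinite _)
    have := hmin _ hPF'
    omega
  -- edges of F are never edges of A
  have hdisjFA : ∀ e, e ∈ F.edgeSet → e ∈ A.edgeSet → False := by
    intro e heF heA
    refine hsmaller (F \ SimpleGraph.fromEdgeSet {e}) e heF rfl
      ⟨le_trans (sdiff_le) hFG, ?_⟩
    refine hFc.mono (fun a b hab => ?_)
    rcases hab with hab | hab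
    · by_cases h : s(a, b) = e
      · exact Or.inr (A.mem_edgeSet.mp (h ▸ heA))
      · exact Or.inl ⟨hab, by simp [fromEdgeSet_adj, h]⟩
    · exact Or.inr hab
  -- key : cycles with edges in F ⊔ A only use edges of A
  have key : ∀ (v : V) (w : G.Walk v v), w.IsCycle →
      (∀ e ∈ w.edges, e ∈ F.edgeSet ∪ A.edgeSet) →
      ∀ e ∈ w.edges, e ∈ A.edgeSet := by
    intro v w hw hew e he
    by_contra heA
    have heF : e ∈ F.edgeSet := (hew e he).resolve_right heA
    have hsub : ∀ e' ∈ w.edges, e' ∈ (F ⊔ A).edgeSet := by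
      intro e' he'
      rw [edgeSet_sup]
      exact hew e' he'
    have hw' : (w.transfer (F ⊔ A) hsub).IsCycle := hw.transfer hsub
    have he' : e ∈ (w.transfer (F ⊔ A) hsub).edges := by
      rwa [Walk.edges_transfer]
    have hnb : ¬ (F ⊔ A).IsBridge e := fun hb =>
      hb.notMem_edges_of_isCycle hw' he'
    induction e using Sym2.ind with
    | _ x y =>
      have hadj : (F ⊔ A).Adj x y := (F ⊔ A).mem_edgeSet.mp (Or.inl heF)
      rw [isBridge_iff] at hnb
      push_neg at hnb
      have hr := hnb
      have hconn := connected_del hFc hr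
      refine hsmaller (F \ SimpleGraph.fromEdgeSet {s(x, y)}) s(x, y) heF rfl
        ⟨le_trans (sdiff_le) hFG, ?_⟩
      refine hconn.mono (fun a b hab => ?_)
      rcases hab with ⟨hab | hab, hX⟩
      · exact Or.inl ⟨hab, hX⟩
      · exact Or.inr hab
  -- package F as a subgraph
  refine ⟨SimpleGraph.toSubgraph F hFG, ?_, ?_, ?_⟩
  · -- acyclicity of T
    intro v w hw hwe
    have hlen : 3 ≤ w.length := hw.three_le_length
    have hne' : w.edges ≠ [] := by
      intro h
      have := w.length_edges
      rw [h] at this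
      simp at this
      omega
    obtain ⟨e, he⟩ := List.exists_mem_of_ne_nil _ hne'
    have heF : e ∈ F.edgeSet := by
      have := hwe e he
      induction e using Sym2.ind with
      | _ x y => exact F.mem_edgeSet.mpr this
    have heA : e ∈ A.edgeSet :=
      key v w hw (fun e' he' => Or.inl (by
        have := hwe e' he'
        induction e' using Sym2.ind with
        | _ x y => exact F.mem_edgeSet.mpr this)) e he
    exact hdisjFA e heF heA
  · -- connectivity
    have hspan : (SimpleGraph.toSubgraph F hFG ⊔ ⨆ i, H i).IsSpanning := by
      intro v
      rw [Subgraph.verts_sup]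
      exact Or.inl (Set.mem_univ v)
    have hcoe : (SimpleGraph.toSubgraph F hFG ⊔ ⨆ i, H i).spanningCoe = F ⊔ A := by
      ext a b
      simp [Subgraph.spanningCoe, Subgraph.sup_adj, hA]
    rw [SimpleGraph.Subgraph.connected_iff']
    have hiso := Subgraph.spanningCoeEquivCoeOfSpanning _ hspan
    rw [← hiso.connected_iff, hcoe]
    exact hFc
  · -- cycles only use edges of ⨆ H i
    intro v w hw hwe e he
    rw [← hAedge]
    refine key v w hw (fun e' he' => ?_) e he
    have := hwe e' he'
    rw [Subgraph.edgeSet_sup] at this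
    rcases this with h | h
    · left
      induction e' using Sym2.ind with
      | _ x y => exact F.mem_edgeSet.mpr h
    · right
      rw [hAedge]
      exact h
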